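/- arXiv:math-ph/0505036 — 2 statements merged into one kernel-verified Lean document; each statement's English description precedes it below -/
import Mathlib

section
/- Fix an integer d ≥ 2 and K > 0, and let ψ_K(η) = η^{1−1/d} + D(K)(1−η)² on [0,1], where D(K) = (2/(dχS))·(σ_d/d)^{−1/d}·(K/2)^{(d+1)/d}. Then: (i) K < K_star if and only if D(K) < C_star; (ii) if K < K_star, the infimum of ψ_K over [0,1] is attained uniquely at η = 0; (iii) if K > K_star, the infimum of ψ_K over [0,1] is attained uniquely at some η_c ∈ (0,1], and this η_c satisfies η_c ≥ η_star = 2/(d+1). -/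
open MeasureTheory Filter

noncomputable section

/-- The double-well potential `F(m) = (1/4)(m²-1)²`. -/
def Fpot (m : ℝ) : ℝ := (1/4) * (m^2 - 1)^2

/-- The fundamental domain `[0,L)^d` of the torus of side `L`. -/
def box (d : ℕ) (L : ℝ) : Set (EuclideanSpace ℝ (Fin d)) :=
  {x | ∀ i, x i ∈ Set.Ico (0:ℝ) L}

/-- `L`-periodicity in each coordinate direction. -/
def PeriodicOn (d : ℕ) (L : ℝ) (m : EuclideanSpace ℝ (Fin d) → ℝ) : Prop :=
  ∀ (x : EuclideanSpace ℝ (Fin d)) (i : Fin d),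
    m (x + L • EuclideanSpace.single i (1:ℝ)) = m x

/-- The Cahn--Hilliard free energy functional on the torus. -/
def FE (d : ℕ) (L : ℝ) (m : EuclideanSpace ℝ (Fin d) → ℝ) : ℝ :=
  ∫ x in box d L, ((1/2) * ‖fderiv ℝ m x‖^2 + Fpot (m x))

/-- Admissible order parameter fields with mean `n`. -/
def Adm (d : ℕ) (L n : ℝ) (m : EuclideanSpace ℝ (Fin d) → ℝ) : Prop :=
  ContDiff ℝ 1 m ∧ PeriodicOn d L m ∧ (1/L^d) * (∫ x in box d L, m x) = n

/-- The minimal free energy `f_L(n)`. -/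
def fL (d : ℕ) (L n : ℝ) : ℝ :=
  sInf {e | ∃ m, Adm d L n m ∧ FE d L m = e}

/-- A minimizer for `f_L(n)`. -/
def IsMinimizer (d : ℕ) (L n : ℝ) (m : EuclideanSpace ℝ (Fin d) → ℝ) : Prop :=
  Adm d L n m ∧ FE d L m = fL d L n

/-- `σ_d`, the surface measure of the unit sphere in `ℝ^d`. -/
def sigma_d (d : ℕ) : ℝ :=
  d * (volume (Metric.ball (0 : EuclideanSpace ℝ (Fin d)) 1)).toReal

/-- The planar surface tension `S = 2^{3/2}/3`. -/
def Sconst : ℝ := (2:ℝ) ^ ((3:ℝ)/2) / 3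

/-- The compressibility `χ = 1/2`. -/
def chiConst : ℝ := 1/2

/-- The equimolar radius `r_0`. -/
def r0 (d : ℕ) (L n : ℝ) : ℝ := ((d / (2 * sigma_d d)) * (n+1)) ^ ((1:ℝ)/d) * L

/-- `|Γ_0| = σ_d r_0^{d-1}`. -/
def Gamma0 (d : ℕ) (L n : ℝ) : ℝ := sigma_d d * (r0 d L n)^(d-1)

/-- `C(n)`. -/
def Cn (d : ℕ) (L n : ℝ) : ℝ :=
  (sigma_d d / (2 * chiConst * Sconst)) * (2/(d:ℝ))^2 * ((r0 d L n)^(d+1) / L^d)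

/-- `D(K)`. -/
def Dconst (d : ℕ) (K : ℝ) : ℝ :=
  (2 / (d * chiConst * Sconst)) * (sigma_d d / d) ^ (-(1:ℝ)/d) * (K/2) ^ (((d:ℝ)+1)/d)

/-- `K_star`. -/
def Kstar (d : ℕ) : ℝ :=
  ((d:ℝ)+1) * (sigma_d d / d) ^ ((1:ℝ)/((d:ℝ)+1)) * (chiConst * Sconst / 2) ^ ((d:ℝ)/((d:ℝ)+1))

/-- Torus distance. -/
def torusDist (d : ℕ) (L : ℝ) (x y : EuclideanSpace ℝ (Fin d)) : ℝ :=
  ⨅ k : Fin d → ℤ, dist x (y + (show EuclideanSpace ℝ (Fin d) from WithLp.toLp 2 (fun i => L * (k i : ℝ))))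

/-- `C_star = (1/d)((d+1)/2)^{(d+1)/d}`. -/
def Cstar (d : ℕ) : ℝ := (1/(d:ℝ)) * (((d:ℝ)+1)/2) ^ (((d:ℝ)+1)/(d:ℝ))

/-- `η_star = 2/(d+1)`. -/
def etaStar (d : ℕ) : ℝ := 2/((d:ℝ)+1)

/-- `ψ_K(η) = η^{1-1/d} + D(K)(1-η)²`. -/
def psiK (d : ℕ) (K η : ℝ) : ℝ := η ^ (1 - 1/(d:ℝ)) + Dconst d K * (1-η)^2


section PsiKAuxiliary

open Real Set

variable {d : ℕ}

lemma aux_sigma_pos (hd : 2 ≤ d) : 0 < sigma_d d := by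
  have hd0 : (0:ℝ) < (d:ℝ) := by
    have : 0 < d := lt_of_lt_of_le Nat.zero_lt_two hd
    exact_mod_cast this
  have hv : 0 < (volume (Metric.ball (0 : EuclideanSpace ℝ (Fin d)) 1)).toReal :=
    ENNReal.toReal_pos (Metric.measure_ball_pos volume _ one_pos).ne' measure_ball_lt_top.ne
  exact mul_pos hd0 hv

lemma aux_B_pos : 0 < chiConst * Sconst := by
  unfold chiConst Sconst
  have h : (0:ℝ) < (2:ℝ) ^ ((3:ℝ)/2) := Real.rpow_pos_of_pos two_pos _
  positivity

lemma aux_alpha_pos (hd : 2 ≤ d) : (0:ℝ) < 1 - 1/(d:ℝ) := by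
  have hn : (2:ℝ) ≤ (d:ℝ) := by exact_mod_cast hd
  have hn0 : (0:ℝ) < (d:ℝ) := by linarith
  have : 1/(d:ℝ) ≤ 1/2 := by
    rw [div_le_div_iff₀ hn0 two_pos]; linarith
  linarith

lemma aux_Cstar_pos (hd : 2 ≤ d) : 0 < Cstar d := by
  have hn : (2:ℝ) ≤ (d:ℝ) := by exact_mod_cast hd
  have hn0 : (0:ℝ) < (d:ℝ) := by linarith
  unfold Cstar
  exact mul_pos (one_div_pos.2 hn0) (Real.rpow_pos_of_pos (by positivity) _)

lemma aux_Kstar_pos (hd : 2 ≤ d) : 0 < Kstar d := by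
  have hn : (2:ℝ) ≤ (d:ℝ) := by exact_mod_cast hd
  have hn0 : (0:ℝ) < (d:ℝ) := by linarith
  have hσ := aux_sigma_pos hd
  have hB := aux_B_pos
  unfold Kstar
  have h1 : 0 < (sigma_d d / (d:ℝ)) ^ ((1:ℝ)/((d:ℝ)+1)) :=
    Real.rpow_pos_of_pos (div_pos hσ hn0) _
  have h2 : 0 < (chiConst * Sconst / 2) ^ ((d:ℝ)/((d:ℝ)+1)) :=
    Real.rpow_pos_of_pos (by linarith) _
  have h3 : (0:ℝ) < (d:ℝ) + 1 := by linarith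
  exact mul_pos (mul_pos h3 h1) h2

lemma aux_Dconst_pos (hd : 2 ≤ d) {K : ℝ} (hK : 0 < K) : 0 < Dconst d K := by
  have hn : (2:ℝ) ≤ (d:ℝ) := by exact_mod_cast hd
  have hn0 : (0:ℝ) < (d:ℝ) := by linarith
  have hσ := aux_sigma_pos hd
  have hB := aux_B_pos
  unfold Dconst
  have h0 : (0:ℝ) < (d:ℝ) * chiConst * Sconst := by
    rw [mul_assoc]; exact mul_pos hn0 hB
  have h1 : 0 < (sigma_d d / (d:ℝ)) ^ (-(1:ℝ)/(d:ℝ)) :=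
    Real.rpow_pos_of_pos (div_pos hσ hn0) _
  have h2 : 0 < (K/2) ^ (((d:ℝ)+1)/(d:ℝ)) := Real.rpow_pos_of_pos (by linarith) _
  exact mul_pos (mul_pos (div_pos two_pos h0) h1) h2

lemma aux_pow_identity {n A B : ℝ} (hn : 2 ≤ n) (hA : 0 < A) (hB : 0 < B) :
    2/(n*B) * A ^ (-(1:ℝ)/n) *
      (((n+1) * A ^ ((1:ℝ)/(n+1)) * (B/2) ^ (n/(n+1)) / 2) ^ ((n+1)/n))
      = 1/n * ((n+1)/2) ^ ((n+1)/n) := by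
  have hn0 : (0:ℝ) < n := by linarith
  have hp0 : (0:ℝ) < n+1 := by linarith
  have hnne : n ≠ 0 := hn0.ne'
  have hpne : n + 1 ≠ 0 := hp0.ne'
  have hBne : B ≠ 0 := hB.ne'
  have hx1 : (0:ℝ) ≤ A ^ ((1:ℝ)/(n+1)) := (Real.rpow_pos_of_pos hA _).le
  have hx2 : (0:ℝ) ≤ (B/2) ^ (n/(n+1)) := (Real.rpow_pos_of_pos (by positivity) _).le
  have hstep : (n+1) * A ^ ((1:ℝ)/(n+1)) * (B/2) ^ (n/(n+1)) / 2
      = ((n+1)/2) * (A ^ ((1:ℝ)/(n+1)) * (B/2) ^ (n/(n+1))) := by ring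
  rw [hstep, Real.mul_rpow (by positivity) (by positivity),
      Real.mul_rpow hx1 hx2, ← Real.rpow_mul hA.le,
      ← Real.rpow_mul (by positivity : (0:ℝ) ≤ B/2),
      show (1:ℝ)/(n+1) * ((n+1)/n) = 1/n by field_simp,
      show n/(n+1) * ((n+1)/n) = 1 by field_simp,
      Real.rpow_one]
  have h2 : A ^ (-(1:ℝ)/n) * A ^ ((1:ℝ)/n) = 1 := by
    rw [← Real.rpow_add hA, show -(1:ℝ)/n + 1/n = 0 by ring, Real.rpow_zero]
  calc 2/(n*B) * A ^ (-(1:ℝ)/n) * (((n+1)/2) ^ ((n+1)/n) * (A ^ ((1:ℝ)/n) * (B/2)))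
      = (A ^ (-(1:ℝ)/n) * A ^ ((1:ℝ)/n)) * (((n+1)/2) ^ ((n+1)/n) * (2/(n*B)) * (B/2)) := by
        ring
    _ = ((n+1)/2) ^ ((n+1)/n) * (2/(n*B)) * (B/2) := by rw [h2, one_mul]
    _ = 1/n * ((n+1)/2) ^ ((n+1)/n) := by field_simp

lemma aux_Dconst_Kstar (hd : 2 ≤ d) : Dconst d (Kstar d) = Cstar d := by
  have hn : (2:ℝ) ≤ (d:ℝ) := by exact_mod_cast hd
  have hn0 : (0:ℝ) < (d:ℝ) := by linarith
  have hA : 0 < sigma_d d / (d:ℝ) := div_pos (aux_sigma_pos hd) hn0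
  unfold Dconst Kstar Cstar
  rw [show ((d:ℝ)) * chiConst * Sconst = (d:ℝ) * (chiConst * Sconst) from mul_assoc _ _ _]
  exact aux_pow_identity hn hA aux_B_pos

lemma aux_Dconst_lt_iff (hd : 2 ≤ d) {K K' : ℝ} (hK : 0 ≤ K) (hK' : 0 ≤ K') :
    Dconst d K < Dconst d K' ↔ K < K' := by
  have hn : (2:ℝ) ≤ (d:ℝ) := by exact_mod_cast hd
  have hn0 : (0:ℝ) < (d:ℝ) := by linarith
  have hp0 : (0:ℝ) < (d:ℝ) + 1 := by linarith
  have hσ := aux_sigma_pos hd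
  have hB := aux_B_pos
  unfold Dconst
  have hc : 0 < 2 / ((d:ℝ) * chiConst * Sconst) * (sigma_d d / (d:ℝ)) ^ (-(1:ℝ)/(d:ℝ)) := by
    have h0 : (0:ℝ) < (d:ℝ) * chiConst * Sconst := by
      rw [mul_assoc]; exact mul_pos hn0 hB
    exact mul_pos (div_pos two_pos h0) (Real.rpow_pos_of_pos (div_pos hσ hn0) _)
  rw [mul_lt_mul_iff_right₀ hc]
  rw [Real.rpow_lt_rpow_iff (by linarith) (by linarith) (div_pos hp0 hn0)]
  constructor <;> intro h <;> linarith

lemma aux_Cstar_inv (hd : 2 ≤ d) :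
    (Cstar d)⁻¹ = (d:ℝ) * ((2/((d:ℝ)+1)) ^ (((d:ℝ)+1)/(d:ℝ))) := by
  have hn : (2:ℝ) ≤ (d:ℝ) := by exact_mod_cast hd
  have hn0 : (0:ℝ) < (d:ℝ) := by linarith
  have hp0 : (0:ℝ) < (d:ℝ)+1 := by linarith
  refine inv_eq_of_mul_eq_one_right ?_
  unfold Cstar
  rw [show (1/(d:ℝ)) * (((d:ℝ)+1)/2) ^ (((d:ℝ)+1)/(d:ℝ)) *
        ((d:ℝ) * ((2/((d:ℝ)+1)) ^ (((d:ℝ)+1)/(d:ℝ))))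
      = ((((d:ℝ)+1)/2) ^ (((d:ℝ)+1)/(d:ℝ)) * ((2/((d:ℝ)+1)) ^ (((d:ℝ)+1)/(d:ℝ))))
          * ((1/(d:ℝ)) * (d:ℝ)) from by ring]
  rw [← Real.mul_rpow (by positivity) (by positivity)]
  rw [show ((d:ℝ)+1)/2 * (2/((d:ℝ)+1)) = 1 from by field_simp]
  rw [Real.one_rpow]
  field_simp

lemma aux_amgm_gen {n t : ℝ} (hn : 2 ≤ n) (ht0 : 0 ≤ t) (ht2 : t ≤ 2) :
    t ^ (1/n) * (2 - t) ≤ n * ((2/(n+1)) ^ ((n+1)/n)) := by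
  have hn0 : (0:ℝ) < n := by linarith
  have hp0 : (0:ℝ) < n+1 := by linarith
  have h2t : (0:ℝ) ≤ 2 - t := by linarith
  have key : (n*t) ^ (1/(n+1)) * (2-t) ^ (n/(n+1)) ≤ 2*n/(n+1) := by
    have h := Real.geom_mean_le_arith_mean2_weighted
      (by positivity : (0:ℝ) ≤ 1/(n+1)) (div_nonneg hn0.le hp0.le)
      (by positivity : (0:ℝ) ≤ n*t) h2t (by field_simp; ring)
    calc (n*t) ^ (1/(n+1)) * (2-t) ^ (n/(n+1))
        ≤ 1/(n+1)*(n*t) + n/(n+1)*(2-t) := h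
      _ = 2*n/(n+1) := by field_simp; ring
  have key2 := Real.rpow_le_rpow
    (by positivity) key (le_of_lt (div_pos hp0 hn0))
  rw [Real.mul_rpow (by positivity) (by positivity),
      ← Real.rpow_mul (by positivity : (0:ℝ) ≤ n*t),
      ← Real.rpow_mul h2t,
      show 1/(n+1) * ((n+1)/n) = 1/n from by field_simp,
      show n/(n+1) * ((n+1)/n) = 1 from by field_simp, Real.rpow_one,
      Real.mul_rpow hn0.le ht0] at key2
  have hsplit : (2*n/(n+1)) ^ ((n+1)/n) = (2/(n+1)) ^ ((n+1)/n) * n ^ ((n+1)/n) := by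
    rw [← Real.mul_rpow (by positivity) hn0.le,
        show 2/(n+1)*n = 2*n/(n+1) from by ring]
  have hnpow : n ^ ((n+1)/n) = n ^ (1/n) * n := by
    rw [show (n+1)/n = 1/n + 1 from by field_simp; ring, Real.rpow_add hn0, Real.rpow_one]
  rw [hsplit, hnpow] at key2
  have hq : 0 < n ^ (1/n) := Real.rpow_pos_of_pos hn0 _
  rw [← mul_le_mul_iff_right₀ hq]
  calc n ^ (1/n) * (t ^ (1/n) * (2-t)) = n ^ (1/n) * t ^ (1/n) * (2-t) := by ring
    _ ≤ (2/(n+1)) ^ ((n+1)/n) * (n ^ (1/n) * n) := key2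
    _ = n ^ (1/n) * (n * (2/(n+1)) ^ ((n+1)/n)) := by ring

lemma aux_amgm (hd : 2 ≤ d) {t : ℝ} (ht0 : 0 ≤ t) (ht2 : t ≤ 2) :
    t ^ ((1:ℝ)/(d:ℝ)) * (2 - t) ≤ (Cstar d)⁻¹ := by
  have hn : (2:ℝ) ≤ (d:ℝ) := by exact_mod_cast hd
  rw [aux_Cstar_inv hd]
  exact aux_amgm_gen hn ht0 ht2

lemma aux_etaStar_eval (hd : 2 ≤ d) :
    (etaStar d) ^ ((1:ℝ)/(d:ℝ)) * (2 - etaStar d) = (Cstar d)⁻¹ := by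
  have hn : (2:ℝ) ≤ (d:ℝ) := by exact_mod_cast hd
  have hn0 : (0:ℝ) < (d:ℝ) := by linarith
  have hp0 : (0:ℝ) < (d:ℝ)+1 := by linarith
  rw [aux_Cstar_inv hd]
  unfold etaStar
  have h1 : 2 - 2/((d:ℝ)+1) = (2/((d:ℝ)+1)) * (d:ℝ) := by field_simp; ring
  rw [h1, show ((d:ℝ)+1)/(d:ℝ) = 1/(d:ℝ) + 1 from by field_simp; ring,
      Real.rpow_add (by positivity : (0:ℝ) < 2/((d:ℝ)+1)), Real.rpow_one]
  ring

lemma aux_psiK_zero (hd : 2 ≤ d) (K : ℝ) : psiK d K 0 = Dconst d K := by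
  have hα := aux_alpha_pos hd
  unfold psiK
  rw [Real.zero_rpow hα.ne']
  ring

lemma aux_psiK_sub (hd : 2 ≤ d) (K : ℝ) {t : ℝ} (ht : 0 < t) :
    psiK d K t - psiK d K 0
      = t ^ (1 - 1/(d:ℝ)) * (1 - Dconst d K * (t ^ ((1:ℝ)/(d:ℝ)) * (2 - t))) := by
  have hid : t ^ (1 - 1/(d:ℝ)) * t ^ ((1:ℝ)/(d:ℝ)) = t := by
    rw [← Real.rpow_add ht, show 1 - 1/(d:ℝ) + (1:ℝ)/(d:ℝ) = 1 from by ring, Real.rpow_one]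
  rw [aux_psiK_zero hd K]
  unfold psiK
  linear_combination (Dconst d K * (2 - t)) * hid

lemma aux_cont (hd : 2 ≤ d) (K : ℝ) : Continuous (psiK d K) := by
  have hα := aux_alpha_pos hd
  unfold psiK
  exact (continuous_iff_continuousAt.2 fun x =>
    Real.continuousAt_rpow_const x _ (Or.inr hα.le)).add
    (continuous_const.mul ((continuous_const.sub continuous_id).pow 2))

lemma aux_hasDerivAt (hd : 2 ≤ d) (K : ℝ) {x : ℝ} (hx : x ≠ 0) :
    HasDerivAt (psiK d K)
      ((1 - 1/(d:ℝ)) * x ^ (-(1:ℝ)/(d:ℝ)) - 2 * Dconst d K * (1 - x)) x := by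
  have h1 : HasDerivAt (fun y : ℝ => y ^ (1 - 1/(d:ℝ)))
      ((1 - 1/(d:ℝ)) * x ^ ((1 - 1/(d:ℝ)) - 1)) x :=
    Real.hasDerivAt_rpow_const (Or.inl hx)
  have h2 := (((hasDerivAt_id x).const_sub 1).pow 2).const_mul (Dconst d K)
  have h := h1.add h2
  rw [show -(1:ℝ)/(d:ℝ) = (1 - 1/(d:ℝ)) - 1 from by ring]
  have h' : HasDerivAt (psiK d K) _ x := h
  convert h' using 1
  simp only [id_eq]
  push_cast
  ring

lemma aux_strictConvex (hd : 2 ≤ d) :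
    StrictConvexOn ℝ (Set.Ioi (0:ℝ)) (fun y : ℝ => y ^ (-(1:ℝ)/(d:ℝ))) := by
  have hn : (2:ℝ) ≤ (d:ℝ) := by exact_mod_cast hd
  have hn0 : (0:ℝ) < (d:ℝ) := by linarith
  have hc : -(1:ℝ)/(d:ℝ) < 0 := div_neg_of_neg_of_pos (by norm_num) hn0
  apply strictConvexOn_of_deriv2_pos (convex_Ioi 0)
  · intro x hx
    exact (Real.continuousAt_rpow_const x _ (Or.inl (ne_of_gt hx))).continuousWithinAt
  · intro x hx
    rw [interior_Ioi] at hx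
    have hx0 : (0:ℝ) < x := hx
    have hev : deriv (fun y : ℝ => y ^ (-(1:ℝ)/(d:ℝ)))
        =ᶠ[nhds x] fun y => (-(1:ℝ)/(d:ℝ)) * y ^ ((-(1:ℝ)/(d:ℝ)) - 1) := by
      filter_upwards [isOpen_Ioi.mem_nhds (Set.mem_Ioi.2 hx0)] with y hy
      exact (Real.hasDerivAt_rpow_const (Or.inl (ne_of_gt hy))).deriv
    have h2 : deriv^[2] (fun y : ℝ => y ^ (-(1:ℝ)/(d:ℝ))) x
        = deriv (fun y : ℝ => (-(1:ℝ)/(d:ℝ)) * y ^ ((-(1:ℝ)/(d:ℝ)) - 1)) x := by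
      show deriv (deriv (fun y : ℝ => y ^ (-(1:ℝ)/(d:ℝ)))) x = _
      exact hev.deriv_eq
    rw [h2, ((Real.hasDerivAt_rpow_const
      (Or.inl hx0.ne')).const_mul (-(1:ℝ)/(d:ℝ))).deriv]
    have hxp : 0 < x ^ ((-(1:ℝ)/(d:ℝ)) - 1 - 1) := Real.rpow_pos_of_pos hx0 _
    have hcc : 0 < (-(1:ℝ)/(d:ℝ)) * ((-(1:ℝ)/(d:ℝ)) - 1) :=
      mul_pos_of_neg_of_neg hc (by linarith)
    calc (0:ℝ) < ((-(1:ℝ)/(d:ℝ)) * ((-(1:ℝ)/(d:ℝ)) - 1)) * x ^ ((-(1:ℝ)/(d:ℝ)) - 1 - 1) :=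
          mul_pos hcc hxp
      _ = (-(1:ℝ)/(d:ℝ)) * (((-(1:ℝ)/(d:ℝ)) - 1) * x ^ ((-(1:ℝ)/(d:ℝ)) - 1 - 1)) := by ring

end PsiKAuxiliary

/-- Minimization of the phenomenological free energy: (i) `K < K_star ↔ D(K) < C_star`;
(ii) if `K < K_star` the infimum of `ψ_K` on `[0,1]` is uniquely attained at `η = 0`;
(iii) if `K > K_star` it is uniquely attained at some `η_c ∈ (0,1]` with `η_c ≥ η_star`. -/

theorem psiK_minimization (d : ℕ) (hd : 2 ≤ d) (K : ℝ) (hK : 0 < K) :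
    (K < Kstar d ↔ Dconst d K < Cstar d) ∧
    (K < Kstar d → ∀ η ∈ Set.Icc (0:ℝ) 1, η ≠ 0 → psiK d K 0 < psiK d K η) ∧
    (Kstar d < K → ∃ ηc ∈ Set.Ioc (0:ℝ) 1, etaStar d ≤ ηc ∧
      (∀ η ∈ Set.Icc (0:ℝ) 1, psiK d K ηc ≤ psiK d K η) ∧
      (∀ η ∈ Set.Icc (0:ℝ) 1, psiK d K η = psiK d K ηc → η = ηc)) := by
  have hn : (2:ℝ) ≤ (d:ℝ) := by exact_mod_cast hd
  have hn0 : (0:ℝ) < (d:ℝ) := by linarith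
  have hp0 : (0:ℝ) < (d:ℝ)+1 := by linarith
  have hα0 : (0:ℝ) < 1 - 1/(d:ℝ) := aux_alpha_pos hd
  have hKstar : 0 < Kstar d := aux_Kstar_pos hd
  have hCpos : 0 < Cstar d := aux_Cstar_pos hd
  have hDpos : 0 < Dconst d K := aux_Dconst_pos hd hK
  have hiff : K < Kstar d ↔ Dconst d K < Cstar d := by
    rw [← aux_Dconst_Kstar hd]
    exact (aux_Dconst_lt_iff hd hK.le hKstar.le).symm
  refine ⟨hiff, ?_, ?_⟩
  · -- part (ii)
    intro hKlt η hη hη0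
    have hDlt : Dconst d K < Cstar d := hiff.1 hKlt
    have ht : 0 < η := lt_of_le_of_ne hη.1 (Ne.symm hη0)
    have hsub := aux_psiK_sub hd K ht
    have hgm := aux_amgm hd ht.le (by linarith [hη.2] : η ≤ 2)
    have h1 : Dconst d K * (η ^ ((1:ℝ)/(d:ℝ)) * (2 - η)) ≤ Dconst d K * (Cstar d)⁻¹ :=
      mul_le_mul_of_nonneg_left hgm hDpos.le
    have h2 : Dconst d K * (Cstar d)⁻¹ < 1 := by
      rw [← div_eq_mul_inv, div_lt_one hCpos]; exact hDlt
    have h3 : 0 < η ^ (1 - 1/(d:ℝ)) := Real.rpow_pos_of_pos ht _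
    have h4 : 0 < η ^ (1 - 1/(d:ℝ)) * (1 - Dconst d K * (η ^ ((1:ℝ)/(d:ℝ)) * (2 - η))) :=
      mul_pos h3 (by linarith)
    linarith
  · -- part (iii)
    intro hKgt
    have hDgt : Cstar d < Dconst d K := by
      rw [← aux_Dconst_Kstar hd]
      exact (aux_Dconst_lt_iff hd hKstar.le hK.le).2 hKgt
    obtain ⟨c, hcmem, hcmin⟩ := isCompact_Icc.exists_isMinOn
      (Set.nonempty_Icc.2 zero_le_one) ((aux_cont hd K).continuousOn)
    -- value at etaStar is below value at 0
    have hsmem : etaStar d ∈ Set.Icc (0:ℝ) 1 := by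
      unfold etaStar
      constructor
      · positivity
      · rw [div_le_one hp0]; linarith
    have hspos : 0 < etaStar d := by unfold etaStar; positivity
    have hstar_lt : psiK d K (etaStar d) < psiK d K 0 := by
      have hsub := aux_psiK_sub hd K hspos
      rw [aux_etaStar_eval hd] at hsub
      have h2 : 1 < Dconst d K * (Cstar d)⁻¹ := by
        rw [← div_eq_mul_inv, lt_div_iff₀ hCpos]; linarith
      have h3 : 0 < (etaStar d) ^ (1 - 1/(d:ℝ)) := Real.rpow_pos_of_pos hspos _
      have h4 : (etaStar d) ^ (1 - 1/(d:ℝ)) * (1 - Dconst d K * (Cstar d)⁻¹) < 0 :=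
        mul_neg_of_pos_of_neg h3 (by linarith)
      linarith
    -- a global minimizer cannot be 0
    have hmin_pos : ∀ y, y ∈ Set.Icc (0:ℝ) 1 → IsMinOn (psiK d K) (Set.Icc 0 1) y → 0 < y := by
      intro y hy hmy
      rcases eq_or_lt_of_le hy.1 with h0 | h0
      · exfalso
        have h1 := isMinOn_iff.mp hmy (etaStar d) hsmem
        rw [← h0] at h1
        linarith
      · exact h0
    -- a global minimizer cannot be 1
    have hmin_ne_one : ∀ y, IsMinOn (psiK d K) (Set.Icc 0 1) y → y ≠ 1 := by
      intro y hmy hy1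
      subst hy1
      have hda := aux_hasDerivAt hd K (x := 1) one_ne_zero
      rw [show (1 - 1/(d:ℝ)) * (1:ℝ) ^ (-(1:ℝ)/(d:ℝ)) - 2 * Dconst d K * (1 - 1)
          = 1 - 1/(d:ℝ) from by rw [Real.one_rpow]; ring] at hda
      rw [hasDerivAt_iff_tendsto_slope] at hda
      have hpos_ev : ∀ᶠ z in nhdsWithin (1:ℝ) (Set.Iio 1), 0 < slope (psiK d K) 1 z := by
        apply Filter.Eventually.filter_mono
          (nhdsWithin_mono 1 (fun z (hz : z ∈ Set.Iio 1) => ne_of_lt hz))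
        exact hda.eventually (eventually_gt_nhds hα0)
      have hIoo : Set.Ioo (0:ℝ) 1 ∈ nhdsWithin (1:ℝ) (Set.Iio 1) :=
        Ioo_mem_nhdsLT_of_mem ⟨zero_lt_one, le_rfl⟩
      obtain ⟨z, hz1, hz2⟩ :=
        (hpos_ev.and (Filter.eventually_of_mem hIoo (fun z hz => hz))).exists
      rw [slope_def_field] at hz1
      have hzlt : z - 1 < 0 := by linarith [hz2.2]
      have hnum : psiK d K z - psiK d K 1 < 0 := by
        rcases div_pos_iff.mp hz1 with ⟨h1, h2⟩ | ⟨h1, h2⟩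
        · linarith
        · linarith
      have := isMinOn_iff.mp hmy z ⟨hz2.1.le, hz2.2.le⟩
      linarith
    -- every global minimizer is an interior stationary point
    have hstat : ∀ y, y ∈ Set.Icc (0:ℝ) 1 → IsMinOn (psiK d K) (Set.Icc 0 1) y →
        (1 - 1/(d:ℝ)) * y ^ (-(1:ℝ)/(d:ℝ)) - 2 * Dconst d K * (1 - y) = 0 := by
      intro y hy hmy
      have h0 : 0 < y := hmin_pos y hy hmy
      have h1 : y < 1 := lt_of_le_of_ne hy.2 (hmin_ne_one y hmy)
      have hloc : IsLocalMin (psiK d K) y := hmy.isLocalMin (Icc_mem_nhds h0 h1)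
      exact hloc.hasDerivAt_eq_zero (aux_hasDerivAt hd K h0.ne')
    have hc0 : 0 < c := hmin_pos c hcmem hcmin
    have hc1 : c < 1 := lt_of_le_of_ne hcmem.2 (hmin_ne_one c hcmin)
    have hφc := hstat c hcmem hcmin
    -- the lower bound c ≥ etaStar
    have hbound : etaStar d ≤ c := by
      have hu : 0 < c ^ (-(1:ℝ)/(d:ℝ)) := Real.rpow_pos_of_pos hc0 _
      have hca : c ^ (1 - 1/(d:ℝ)) = c * c ^ (-(1:ℝ)/(d:ℝ)) := by
        rw [show 1 - 1/(d:ℝ) = 1 + (-(1:ℝ)/(d:ℝ)) from by ring,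
          Real.rpow_add hc0, Real.rpow_one]
      have hψc_le : psiK d K c ≤ psiK d K 0 :=
        isMinOn_iff.mp hcmin 0 (Set.left_mem_Icc.2 zero_le_one)
      rw [aux_psiK_zero hd K] at hψc_le
      have hexp : psiK d K c = c ^ (1 - 1/(d:ℝ)) + Dconst d K * (1-c)^2 := rfl
      rw [hexp, hca] at hψc_le
      have h4 : c * (c ^ (-(1:ℝ)/(d:ℝ))) ≤ c * (Dconst d K * (2 - c)) := by nlinarith
      have h3 : c ^ (-(1:ℝ)/(d:ℝ)) ≤ Dconst d K * (2 - c) := le_of_mul_le_mul_left h4 hc0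
      have h5 : (1 - 1/(d:ℝ)) * c ^ (-(1:ℝ)/(d:ℝ))
          ≤ (1 - 1/(d:ℝ)) * (Dconst d K * (2 - c)) :=
        mul_le_mul_of_nonneg_left h3 hα0.le
      have h7 : Dconst d K * (2*(1-c)) ≤ Dconst d K * ((1 - 1/(d:ℝ))*(2-c)) := by nlinarith
      have h6 : 2 * (1 - c) ≤ (1 - 1/(d:ℝ)) * (2 - c) := le_of_mul_le_mul_left
        (by calc Dconst d K * (2*(1-c)) ≤ Dconst d K * ((1 - 1/(d:ℝ))*(2-c)) := h7) hDpos
      have h9 : (d:ℝ) * (2*(1-c)) ≤ (d:ℝ) * ((1 - 1/(d:ℝ))*(2-c)) :=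
        mul_le_mul_of_nonneg_left h6 hn0.le
      have h11 : (d:ℝ) * ((1 - 1/(d:ℝ))*(2-c)) = ((d:ℝ)-1)*(2-c) := by
        field_simp
      rw [h11] at h9
      unfold etaStar
      rw [div_le_iff₀ hp0]
      nlinarith
    -- the key decreasing lemma between two stationary points
    have key : ∀ a b : ℝ, 0 < a → a < b → b < 1 →
        ((1 - 1/(d:ℝ)) * a ^ (-(1:ℝ)/(d:ℝ)) - 2 * Dconst d K * (1 - a) = 0) →
        ((1 - 1/(d:ℝ)) * b ^ (-(1:ℝ)/(d:ℝ)) - 2 * Dconst d K * (1 - b) = 0) →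
        psiK d K b < psiK d K a := by
      intro a b ha hab hb1 hfa hfb
      have hneg : ∀ x ∈ Set.Ioo a b, deriv (psiK d K) x < 0 := by
        intro x hx
        have hx0 : 0 < x := lt_trans ha hx.1
        rw [(aux_hasDerivAt hd K hx0.ne').deriv]
        have hconv := aux_strictConvex hd
        have hba : (0:ℝ) < b - a := by linarith
        set t : ℝ := (b - x)/(b - a) with htdef
        set s : ℝ := (x - a)/(b - a) with hsdef
        have ht : 0 < t := div_pos (by linarith [hx.2]) hba
        have hs : 0 < s := div_pos (by linarith [hx.1]) hba
        have hts : t + s = 1 := by rw [htdef, hsdef]; field_simp; ring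
        have hx_eq : t * a + s * b = x := by rw [htdef, hsdef]; field_simp; ring
        have hcv := hconv.2 (Set.mem_Ioi.2 ha) (Set.mem_Ioi.2 (lt_trans ha hab))
          (ne_of_lt hab) ht hs hts
        simp only [smul_eq_mul] at hcv
        rw [hx_eq] at hcv
        have hmul := mul_lt_mul_of_pos_left hcv hα0
        have hrhs : (1 - 1/(d:ℝ)) * (t * a ^ (-(1:ℝ)/(d:ℝ)) + s * b ^ (-(1:ℝ)/(d:ℝ)))
            = 2 * Dconst d K * (1 - x) := by
          calc (1 - 1/(d:ℝ)) * (t * a ^ (-(1:ℝ)/(d:ℝ)) + s * b ^ (-(1:ℝ)/(d:ℝ)))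
              = t * ((1 - 1/(d:ℝ)) * a ^ (-(1:ℝ)/(d:ℝ)))
                + s * ((1 - 1/(d:ℝ)) * b ^ (-(1:ℝ)/(d:ℝ))) := by ring
            _ = t * (2 * Dconst d K * (1 - a)) + s * (2 * Dconst d K * (1 - b)) := by
                rw [show (1 - 1/(d:ℝ)) * a ^ (-(1:ℝ)/(d:ℝ)) = 2 * Dconst d K * (1 - a)
                    from by linarith,
                  show (1 - 1/(d:ℝ)) * b ^ (-(1:ℝ)/(d:ℝ)) = 2 * Dconst d K * (1 - b)
                    from by linarith]
            _ = 2 * Dconst d K * ((t + s) - (t * a + s * b)) := by ring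
            _ = 2 * Dconst d K * (1 - x) := by rw [hts, hx_eq]
        linarith
      have hanti : StrictAntiOn (psiK d K) (Set.Icc a b) :=
        strictAntiOn_of_deriv_neg (convex_Icc a b) ((aux_cont hd K).continuousOn)
          (fun x hx => by rw [interior_Icc] at hx; exact hneg x hx)
      exact hanti (Set.left_mem_Icc.2 hab.le) (Set.right_mem_Icc.2 hab.le) hab
    -- uniqueness
    have huniq : ∀ η ∈ Set.Icc (0:ℝ) 1, psiK d K η = psiK d K c → η = c := by
      intro η hη heq
      by_contra hne
      have hmη : IsMinOn (psiK d K) (Set.Icc 0 1) η := isMinOn_iff.mpr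
        (fun z hz => heq ▸ (isMinOn_iff.mp hcmin z hz))
      have hη0 : 0 < η := hmin_pos η hη hmη
      have hη1 : η < 1 := lt_of_le_of_ne hη.2 (hmin_ne_one η hmη)
      have hφη := hstat η hη hmη
      rcases lt_or_gt_of_ne hne with hlt | hgt
      · have hlt2 := key η c hη0 hlt hc1 hφη hφc
        rw [heq] at hlt2
        exact lt_irrefl _ hlt2
      · have hlt2 := key c η hc0 hgt hη1 hφc hφη
        rw [heq] at hlt2
        exact lt_irrefl _ hlt2
    exact ⟨c, ⟨hc0, hcmem.2⟩, hbound, isMinOn_iff.mp hcmin, huniq⟩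


end
end

section
/- Let m be a C² function on the torus Ω satisfying the Euler–Lagrange equation −Δm(x) + m(x)³ − m(x) + μ = 0 for all x ∈ Ω, for some constant μ ∈ ℝ. Define λ = (max_Ω m) − 1 and ν = (min_Ω m) + 1. Then ν ≥ λ. Consequently, if in addition (1/L^d)∫_Ω m dx = −1 + δ for some δ > 0, then δ ≥ ν ≥ λ; in particular max_Ω m ≤ 1 + δ. -/
open MeasureTheory Filter

noncomputable section

/-- The Laplacian on `ℝ^d`, as the sum of second partial derivatives. -/
def lap (d : ℕ) (m : EuclideanSpace ℝ (Fin d) → ℝ) (x : EuclideanSpace ℝ (Fin d)) : ℝ :=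
  ∑ i : Fin d, fderiv ℝ (fun y => fderiv ℝ m y (EuclideanSpace.single i (1:ℝ))) x
    (EuclideanSpace.single i (1:ℝ))

section
open Topology Set

/-- AUX -/
lemma EL_aux_second_deriv_nonpos_of_max {g : ℝ → ℝ} (hg : Differentiable ℝ g)
    (hg2 : DifferentiableAt ℝ (deriv g) 0) (hmax : ∀ t, g t ≤ g 0) :
    deriv (deriv g) 0 ≤ 0 := by
  by_contra hpos
  push_neg at hpos
  have h0 : deriv g 0 = 0 := by
    have hl : IsLocalMax g 0 := Filter.Eventually.of_forall (fun t => hmax t)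
    exact hl.deriv_eq_zero
  have hd : HasDerivAt (deriv g) (deriv (deriv g) 0) 0 := hg2.hasDerivAt
  rw [hasDerivAt_iff_tendsto_slope] at hd
  have hev : ∀ᶠ t in 𝓝[≠] (0:ℝ), 0 < slope (deriv g) 0 t :=
    hd.eventually (eventually_gt_nhds hpos)
  have hle : 𝓝[>] (0:ℝ) ≤ 𝓝[≠] (0:ℝ) :=
    nhdsWithin_mono 0 (fun t ht => ne_of_gt ht)
  have hev' : ∀ᶠ t in 𝓝[>] (0:ℝ), 0 < deriv g t := by
    filter_upwards [hev.filter_mono hle, self_mem_nhdsWithin] with t ht ht'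
    have hs : slope (deriv g) 0 t = deriv g t / t := by
      simp [slope_def_field, h0, div_eq_inv_mul]
    rw [hs] at ht
    have ht0 : (0:ℝ) < t := ht'
    exact (div_pos_iff.1 ht).resolve_right (fun h => absurd ht0 (not_lt.2 h.2.le)) |>.1
  obtain ⟨ε, hε0, hsub⟩ := mem_nhdsGT_iff_exists_Ioo_subset.1 hev'
  have hε : (0:ℝ) < ε := hε0
  have hmono : StrictMonoOn g (Icc 0 (ε/2)) := by
    apply strictMonoOn_of_deriv_pos (convex_Icc _ _) hg.continuous.continuousOn
    intro x hx
    rw [interior_Icc] at hx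
    exact hsub ⟨hx.1, lt_of_lt_of_le hx.2 (by linarith)⟩
  have : g 0 < g (ε/2) := hmono ⟨le_refl _, by linarith⟩ ⟨by linarith, le_refl _⟩ (by linarith)
  exact absurd (hmax (ε/2)) (not_le.2 this)

/-- AUX -/
lemma EL_aux_second_partial_nonpos {d : ℕ} {m : EuclideanSpace ℝ (Fin d) → ℝ}
    (hm : ContDiff ℝ 2 m) (x₀ : EuclideanSpace ℝ (Fin d))
    (hmax : ∀ y, m y ≤ m x₀) (v : EuclideanSpace ℝ (Fin d)) :
    fderiv ℝ (fun y => fderiv ℝ m y v) x₀ v ≤ 0 := by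
  have hm1 : Differentiable ℝ m := hm.differentiable two_ne_zero
  set ℓ : ℝ → EuclideanSpace ℝ (Fin d) := fun t => x₀ + t • v with hℓ
  have hline : ∀ t : ℝ, HasDerivAt ℓ v t := by
    intro t
    have h1 : HasDerivAt (fun s : ℝ => s • v) ((1:ℝ) • v) t :=
      (hasDerivAt_id t).smul_const v
    rw [one_smul] at h1
    exact h1.const_add x₀
  set g : ℝ → ℝ := fun t => m (ℓ t) with hg
  have hgd : ∀ t : ℝ, HasDerivAt g (fderiv ℝ m (ℓ t) v) t := fun t =>
    (hm1 (ℓ t)).hasFDerivAt.comp_hasDerivAt t (hline t)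
  set F : EuclideanSpace ℝ (Fin d) → ℝ := fun y => fderiv ℝ m y v with hF
  have hFc : ContDiff ℝ 1 F :=
    (hm.fderiv_right (m := 1) (by norm_num)).clm_apply (contDiff_const (c := v))
  have hderivg : deriv g = fun t => F (ℓ t) := funext fun t => (hgd t).deriv
  have hdd : HasDerivAt (deriv g) (fderiv ℝ F x₀ v) 0 := by
    rw [hderivg]
    have hc : HasFDerivAt F (fderiv ℝ F x₀) (ℓ 0) := by
      have : ℓ 0 = x₀ := by simp [hℓ]
      rw [this]
      exact (hFc.differentiable one_ne_zero x₀).hasFDerivAt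
    exact hc.comp_hasDerivAt 0 (hline 0)
  have hkey : deriv (deriv g) 0 ≤ 0 := by
    apply EL_aux_second_deriv_nonpos_of_max
    · exact fun t => (hgd t).differentiableAt
    · exact hdd.differentiableAt
    · intro t
      have : g 0 = m x₀ := by simp [hg, hℓ]
      rw [this]; exact hmax _
  rwa [hdd.deriv] at hkey

/-- AUX -/
lemma EL_aux_second_partial_nonneg {d : ℕ} {m : EuclideanSpace ℝ (Fin d) → ℝ}
    (hm : ContDiff ℝ 2 m) (x₀ : EuclideanSpace ℝ (Fin d))
    (hmin : ∀ y, m x₀ ≤ m y) (v : EuclideanSpace ℝ (Fin d)) :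
    0 ≤ fderiv ℝ (fun y => fderiv ℝ m y v) x₀ v := by
  have h := EL_aux_second_partial_nonpos (m := fun y => -m y) hm.neg x₀
    (fun y => neg_le_neg (hmin y)) v
  have e1 : (fun y => fderiv ℝ (fun z => -m z) y v) = fun y => -(fderiv ℝ m y v) := by
    funext y; rw [fderiv_fun_neg]; simp
  rw [e1] at h
  have e2 : fderiv ℝ (fun y => -(fderiv ℝ m y v)) x₀ v
      = -(fderiv ℝ (fun y => fderiv ℝ m y v) x₀ v) := by
    rw [fderiv_fun_neg]; simp
  rw [e2] at h
  linarith

/-- AUX -/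
lemma EL_aux_per_int {d : ℕ} {L : ℝ} {m : EuclideanSpace ℝ (Fin d) → ℝ}
    (hper : PeriodicOn d L m) (x : EuclideanSpace ℝ (Fin d)) (i : Fin d) (k : ℤ) :
    m (x + ((k:ℝ) * L) • EuclideanSpace.single i (1:ℝ)) = m x := by
  induction k using Int.induction_on with
  | zero => simp
  | succ n ih =>
      have : ((((n:ℤ)+1 : ℤ)):ℝ) * L = (n:ℝ) * L + L := by push_cast; ring
      rw [this, add_smul, ← add_assoc, hper]
      exact_mod_cast ih
  | pred n ih =>
      have h1 : m (x + ((-(n:ℝ) - 1) * L) • EuclideanSpace.single i (1:ℝ)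
            + L • EuclideanSpace.single i (1:ℝ))
          = m (x + ((-(n:ℝ) - 1) * L) • EuclideanSpace.single i (1:ℝ)) := hper _ i
      have h2 : x + ((-(n:ℝ) - 1) * L) • EuclideanSpace.single i (1:ℝ)
            + L • EuclideanSpace.single i (1:ℝ)
          = x + ((-(n:ℝ)) * L) • EuclideanSpace.single i (1:ℝ) := by
        rw [add_assoc, ← add_smul]; ring_nf
      rw [h2] at h1
      have ihn : m (x + ((-(n:ℝ)) * L) • EuclideanSpace.single i (1:ℝ)) = m x := by
        have := ih; push_cast at this ⊢; convert this using 3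
      rw [h1] at ihn
      convert ihn using 3
      push_cast; ring

/-- AUX -/
lemma EL_aux_per_rep {d : ℕ} {L : ℝ} (hL : 0 < L) {m : EuclideanSpace ℝ (Fin d) → ℝ}
    (hper : PeriodicOn d L m) (y : EuclideanSpace ℝ (Fin d)) :
    ∃ x ∈ box d L, m x = m y := by
  have key : ∀ (s : Finset (Fin d)) (y : EuclideanSpace ℝ (Fin d)),
      ∃ x : EuclideanSpace ℝ (Fin d), (∀ i ∈ s, x i ∈ Set.Ico (0:ℝ) L) ∧
        (∀ i ∉ s, x i = y i) ∧ m x = m y := by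
    intro s
    induction s using Finset.induction_on with
    | empty => intro y; exact ⟨y, by simp, by simp, rfl⟩
    | @insert a s' hnotmem ih =>
        intro y
        obtain ⟨x, hx1, hx2, hx3⟩ := ih y
        refine ⟨x + (((-⌊x a / L⌋ : ℤ):ℝ) * L) • EuclideanSpace.single a (1:ℝ), ?_, ?_, ?_⟩
        · intro i hi
          rcases Finset.mem_insert.1 hi with h | h
          · rw [h]
            have heq : (x + (((-⌊x a / L⌋ : ℤ):ℝ) * L) • EuclideanSpace.single a (1:ℝ)) a
                = x a - ⌊x a / L⌋ * L := by
              simp [EuclideanSpace.single_apply]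
              ring
            rw [heq]
            exact ⟨Int.sub_floor_div_mul_nonneg (x a) hL, Int.sub_floor_div_mul_lt (x a) hL⟩
          · have : (x + (((-⌊x a / L⌋ : ℤ):ℝ) * L) • EuclideanSpace.single a (1:ℝ)) i = x i := by
              have hne : i ≠ a := by rintro rfl; exact hnotmem h
              simp [EuclideanSpace.single_apply, hne]
            rw [this]; exact hx1 i h
        · intro i hi
          have hia : i ≠ a := fun h => hi (by simp [h])
          have his : i ∉ s' := fun h => hi (Finset.mem_insert_of_mem h)
          have : (x + (((-⌊x a / L⌋ : ℤ):ℝ) * L) • EuclideanSpace.single a (1:ℝ)) i = x i := by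
            simp [EuclideanSpace.single_apply, hia]
          rw [this]; exact hx2 i his
        · rw [EL_aux_per_int hper x a (-⌊x a / L⌋)]; exact hx3
  obtain ⟨x, hx1, _, hx3⟩ := key Finset.univ y
  exact ⟨x, fun i => hx1 i (Finset.mem_univ i), hx3⟩

/-- AUX -/
lemma EL_aux_box_eq (d : ℕ) (L : ℝ) : box d L
    = (MeasurableEquiv.toLp 2 (Fin d → ℝ)).symm ⁻¹' (Set.univ.pi fun _ => Set.Ico (0:ℝ) L) := by
  ext x
  simp [box, Set.mem_pi]

/-- AUX -/
lemma EL_aux_box_meas (d : ℕ) (L : ℝ) : MeasurableSet (box d L) := by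
  rw [EL_aux_box_eq]
  exact (MeasurableEquiv.measurable _) (MeasurableSet.univ_pi fun _ => measurableSet_Ico)

/-- AUX -/
lemma EL_aux_box_vol (d : ℕ) (L : ℝ) : volume (box d L) = ENNReal.ofReal L ^ d := by
  rw [EL_aux_box_eq]
  rw [(EuclideanSpace.volume_preserving_symm_measurableEquiv_toLp (Fin d)).measure_preimage
    ((MeasurableSet.univ_pi fun _ => measurableSet_Ico).nullMeasurableSet)]
  simp [volume_pi_pi]

end

/-- Lemma 3.1: for any solution of the Euler--Lagrange equation
`-Δm + m³ - m + μ = 0` on the torus, `ν = min m + 1 ≥ λ = max m - 1`; consequently if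
the mean of `m` is `-1 + δ` then `δ ≥ ν ≥ λ`, so `max m ≤ 1 + δ`. -/
theorem EL_max_principle (d : ℕ) (hd : 2 ≤ d) (L : ℝ) (hL : 0 < L)
    (m : EuclideanSpace ℝ (Fin d) → ℝ) (μ : ℝ)
    (hm : ContDiff ℝ 2 m) (hper : PeriodicOn d L m)
    (hEL : ∀ x, -lap d m x + (m x)^3 - m x + μ = 0) :
    sSup (m '' box d L) - 1 ≤ sInf (m '' box d L) + 1 ∧
    ∀ δ : ℝ, 0 < δ → (1/L^d) * (∫ x in box d L, m x) = -1 + δ →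
      sInf (m '' box d L) + 1 ≤ δ ∧ sSup (m '' box d L) ≤ 1 + δ := by
  have hmc : Continuous m := hm.continuous
  -- box is contained in a compact ball
  have hboxK : box d L ⊆ Metric.closedBall 0 ((d:ℝ) * L) := by
    intro x hx
    rw [Metric.mem_closedBall, dist_zero_right]
    have hd1 : (1:ℝ) ≤ (d:ℝ) := by exact_mod_cast Nat.one_le_of_lt hd
    have h1 : ‖x‖ ≤ Real.sqrt ((d:ℝ) * L^2) := by
      rw [EuclideanSpace.norm_eq]
      apply Real.sqrt_le_sqrt
      calc ∑ i, ‖x i‖^2 ≤ ∑ _i : Fin d, L^2 := by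
            apply Finset.sum_le_sum; intro i _
            have h := hx i
            rw [Real.norm_eq_abs, sq_abs]
            nlinarith [h.1, h.2]
        _ = (d:ℝ) * L^2 := by simp [Finset.sum_const]
    have h2 : Real.sqrt ((d:ℝ)*L^2) ≤ (d:ℝ)*L := by
      rw [show (d:ℝ)*L = Real.sqrt (((d:ℝ)*L)^2) from (Real.sqrt_sq (by positivity)).symm]
      apply Real.sqrt_le_sqrt
      nlinarith [sq_nonneg L]
    linarith
  have hKc : IsCompact (Metric.closedBall (0 : EuclideanSpace ℝ (Fin d)) ((d:ℝ)*L)) :=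
    isCompact_closedBall _ _
  have hKne : (Metric.closedBall (0 : EuclideanSpace ℝ (Fin d)) ((d:ℝ)*L)).Nonempty :=
    ⟨0, Metric.mem_closedBall_self (by positivity)⟩
  -- global max
  obtain ⟨z, hzK, hz⟩ := hKc.exists_isMaxOn hKne hmc.continuousOn
  obtain ⟨xM, hxMb, hxMe⟩ := EL_aux_per_rep hL hper z
  have hMmax : ∀ y, m y ≤ m xM := by
    intro y
    obtain ⟨x, hxb, hxe⟩ := EL_aux_per_rep hL hper y
    rw [← hxe, hxMe]
    exact hz (hboxK hxb)
  -- global min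
  obtain ⟨w, hwK, hw⟩ := hKc.exists_isMinOn hKne hmc.continuousOn
  obtain ⟨xm, hxmb, hxme⟩ := EL_aux_per_rep hL hper w
  have hmmin : ∀ y, m xm ≤ m y := by
    intro y
    obtain ⟨x, hxb, hxe⟩ := EL_aux_per_rep hL hper y
    rw [← hxe, hxme]
    exact hw (hboxK hxb)
  -- identify sSup and sInf
  have hSup : sSup (m '' box d L) = m xM :=
    IsGreatest.csSup_eq ⟨⟨xM, hxMb, rfl⟩, by rintro v ⟨x, hx, rfl⟩; exact hMmax x⟩
  have hInf : sInf (m '' box d L) = m xm :=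
    IsLeast.csInf_eq ⟨⟨xm, hxmb, rfl⟩, by rintro v ⟨x, hx, rfl⟩; exact hmmin x⟩
  -- Laplacian signs
  have hlapM : lap d m xM ≤ 0 := by
    apply Finset.sum_nonpos
    intro i _
    exact EL_aux_second_partial_nonpos hm xM hMmax _
  have hlapm : 0 ≤ lap d m xm := by
    apply Finset.sum_nonneg
    intro i _
    exact EL_aux_second_partial_nonneg hm xm hmmin _
  -- EL equation at max and min
  have hM : (m xM)^3 - m xM + μ ≤ 0 := by have := hEL xM; linarith
  have hmn : 0 ≤ (m xm)^3 - m xm + μ := by have := hEL xm; linarith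
  have hle : m xm ≤ m xM := hmmin xM
  have hmain : m xM - 1 ≤ m xm + 1 := by
    nlinarith [sq_nonneg (m xM - m xm), sq_nonneg (m xM + m xm),
      sq_nonneg (m xM * m xm + 1), sq_nonneg (m xM * m xm - 1)]
  refine ⟨by rw [hSup, hInf]; exact hmain, ?_⟩
  intro δ hδ hmean
  -- integral bound gives m xm ≤ -1 + δ
  have hLd : (0:ℝ) < L^d := by positivity
  have hvolfin : volume (box d L) ≠ ⊤ := by
    rw [EL_aux_box_vol]
    exact ENNReal.pow_ne_top ENNReal.ofReal_ne_top
  have hvolre : (volume (box d L)).toReal = L^d := by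
    rw [EL_aux_box_vol, ENNReal.toReal_pow, ENNReal.toReal_ofReal hL.le]
  have hint : IntegrableOn m (box d L) volume := by
    apply Measure.integrableOn_of_bounded hvolfin hmc.aestronglyMeasurable
    filter_upwards with x
    rw [Real.norm_eq_abs, abs_le]
    constructor
    · have := hmmin x
      have h2 : -(max (m xM) (-(m xm))) ≤ m xm := by
        have := le_max_right (m xM) (-(m xm)); linarith
      linarith
    · exact le_trans (hMmax x) (le_max_left _ _)
  have hIneq : m xm * L^d ≤ ∫ x in box d L, m x := by
    have := setIntegral_ge_of_const_le_real (EL_aux_box_meas d L) hvolfin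
      (fun x _ => hmmin x) hint
    rwa [measureReal_def, hvolre] at this
  have hIval : ∫ x in box d L, m x = (-1 + δ) * L^d := by
    field_simp at hmean
    linarith [hmean]
  have hxmle : m xm ≤ -1 + δ := by
    rw [hIval] at hIneq
    exact le_of_mul_le_mul_right hIneq hLd
  constructor
  · rw [hInf]; linarith
  · rw [hSup]; rw [hInf] at *; linarith

end
end
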